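/- Let X ∈ L²_ℙ(Ω;ℝ^d) with law μ := X♯ℙ, and let Φ be a real-valued function on P₂(ℝ^d). Assume Φ is Fréchet differentiable at μ in the plan-wise sense: there exists g ∈ L²_μ(ℝ^d;ℝ^d) such that for every ε > 0 there is δ > 0 so that for every ν ∈ P₂(ℝ^d) and every coupling γ of μ and ν with W_{2,γ} := (∫|x−y|² dγ)^{1/2} ≤ δ one has |Φ(ν) − Φ(μ) − ∫⟨g(x), y−x⟩ dγ(x,y)| ≤ ε·W_{2,γ}. Then the lift Φ̃ : L²_ℙ(Ω;ℝ^d) → ℝ, Φ̃(Y) := Φ(Y♯ℙ), is Fréchet differentiable at X, with derivative the continuous linear functional H ↦ ∫_Ω ⟨g(X(ω)), H(ω)⟩ dℙ(ω); equivalently, the gradient of Φ̃ at X equals g∘X in L²_ℙ(Ω;ℝ^d). -/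

import Mathlib

open MeasureTheory
open scoped RealInnerProductSpace

private lemma l2norm_eq_sqrt {Ω : Type*} [MeasurableSpace Ω] {d : ℕ}
    (ℙ : Measure Ω) (f : Lp (EuclideanSpace ℝ (Fin d)) 2 ℙ) :
    ‖f‖ = Real.sqrt (∫ ω, ‖(f : Ω → EuclideanSpace ℝ (Fin d)) ω‖ ^ 2 ∂ℙ) := by
  rw [norm_eq_sqrt_re_inner (𝕜 := ℝ), RCLike.re_to_real]
  congr 1
  rw [L2.inner_def]
  exact integral_congr_ae (Filter.Eventually.of_forall fun ω =>
    real_inner_self_eq_norm_sq _)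

theorem lift_hasFDerivAt_of_planwise_differentiable
    {Ω : Type*} [MeasurableSpace Ω] {d : ℕ}
    (ℙ : Measure Ω) [IsProbabilityMeasure ℙ]
    (Φ : Measure (EuclideanSpace ℝ (Fin d)) → ℝ)
    (X : Lp (EuclideanSpace ℝ (Fin d)) 2 ℙ)
    (g : EuclideanSpace ℝ (Fin d) → EuclideanSpace ℝ (Fin d))
    (hg : MemLp g 2 (Measure.map (X : Ω → EuclideanSpace ℝ (Fin d)) ℙ))
    (hdiff : ∀ ε > (0 : ℝ), ∃ δ > (0 : ℝ),
      ∀ ν : Measure (EuclideanSpace ℝ (Fin d)), IsProbabilityMeasure ν →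
        Integrable (fun y => ‖y‖ ^ 2) ν →
        ∀ γ : Measure (EuclideanSpace ℝ (Fin d) × EuclideanSpace ℝ (Fin d)),
          IsProbabilityMeasure γ →
          γ.map Prod.fst = Measure.map (X : Ω → EuclideanSpace ℝ (Fin d)) ℙ →
          γ.map Prod.snd = ν →
          Integrable (fun p => ‖p.1 - p.2‖ ^ 2) γ →
          Real.sqrt (∫ p, ‖p.1 - p.2‖ ^ 2 ∂γ) ≤ δ →
          |Φ ν - Φ (Measure.map (X : Ω → EuclideanSpace ℝ (Fin d)) ℙ)
              - ∫ p, ⟪g p.1, p.2 - p.1⟫ ∂γ|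
            ≤ ε * Real.sqrt (∫ p, ‖p.1 - p.2‖ ^ 2 ∂γ)) :
    ∃ L : Lp (EuclideanSpace ℝ (Fin d)) 2 ℙ →L[ℝ] ℝ,
      (∀ H : Lp (EuclideanSpace ℝ (Fin d)) 2 ℙ,
        L H = ∫ ω, ⟪g ((X : Ω → EuclideanSpace ℝ (Fin d)) ω),
            (H : Ω → EuclideanSpace ℝ (Fin d)) ω⟫ ∂ℙ) ∧
      HasFDerivAt
        (fun Y : Lp (EuclideanSpace ℝ (Fin d)) 2 ℙ =>
          Φ (Measure.map (Y : Ω → EuclideanSpace ℝ (Fin d)) ℙ))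
        L X := by
  have hXm : Measurable (X : Ω → EuclideanSpace ℝ (Fin d)) :=
    (Lp.stronglyMeasurable X).measurable
  have hGX : MemLp (g ∘ (X : Ω → EuclideanSpace ℝ (Fin d))) 2 ℙ :=
    (memLp_map_measure_iff hg.aestronglyMeasurable hXm.aemeasurable).mp hg
  set G : Lp (EuclideanSpace ℝ (Fin d)) 2 ℙ := hGX.toLp _ with hGdef
  have hGcoe : (G : Ω → EuclideanSpace ℝ (Fin d))
      =ᵐ[ℙ] g ∘ (X : Ω → EuclideanSpace ℝ (Fin d)) := hGX.coeFn_toLp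
  refine ⟨innerSL ℝ G, ?_, ?_⟩
  · intro H
    rw [innerSL_apply_apply, L2.inner_def]
    refine integral_congr_ae (hGcoe.mono fun ω h => ?_)
    simp only [h, Function.comp_apply]
  · rw [hasFDerivAt_iff_isLittleO, Asymptotics.isLittleO_iff]
    intro c hc
    obtain ⟨δ, hδ, hδ'⟩ := hdiff c hc
    filter_upwards [Metric.closedBall_mem_nhds X hδ] with Y hY
    have hYm : Measurable (Y : Ω → EuclideanSpace ℝ (Fin d)) :=
      (Lp.stronglyMeasurable Y).measurable
    set pair : Ω → EuclideanSpace ℝ (Fin d) × EuclideanSpace ℝ (Fin d) :=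
      fun ω => ((X : Ω → EuclideanSpace ℝ (Fin d)) ω,
        (Y : Ω → EuclideanSpace ℝ (Fin d)) ω) with hpairdef
    have hpm : Measurable pair := hXm.prodMk hYm
    set γ : Measure (EuclideanSpace ℝ (Fin d) × EuclideanSpace ℝ (Fin d)) :=
      Measure.map pair ℙ with hγdef
    set ν : Measure (EuclideanSpace ℝ (Fin d)) :=
      Measure.map (Y : Ω → EuclideanSpace ℝ (Fin d)) ℙ with hνdef
    have hγp : IsProbabilityMeasure γ := Measure.isProbabilityMeasure_map hpm.aemeasurable
    have hνp : IsProbabilityMeasure ν := Measure.isProbabilityMeasure_map hYm.aemeasurable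
    have hm1 : γ.map Prod.fst = Measure.map (X : Ω → EuclideanSpace ℝ (Fin d)) ℙ := by
      rw [hγdef, Measure.map_map measurable_fst hpm]; rfl
    have hm2 : γ.map Prod.snd = ν := by
      rw [hγdef, hνdef, Measure.map_map measurable_snd hpm]; rfl
    have hν2 : Integrable (fun y => ‖y‖ ^ 2) ν := by
      rw [hνdef, integrable_map_measure (g := fun y : EuclideanSpace ℝ (Fin d) => ‖y‖ ^ 2)
        ((continuous_norm.pow 2).aestronglyMeasurable :
          AEStronglyMeasurable (fun y : EuclideanSpace ℝ (Fin d) => ‖y‖ ^ 2) _) hYm.aemeasurable]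
      exact (memLp_two_iff_integrable_sq_norm
        (Lp.aestronglyMeasurable Y)).mp (Lp.memLp Y)
    have hXY : MemLp (fun ω => (X : Ω → EuclideanSpace ℝ (Fin d)) ω
        - (Y : Ω → EuclideanSpace ℝ (Fin d)) ω) 2 ℙ :=
      (Lp.memLp (X - Y)).ae_eq (Lp.coeFn_sub X Y)
    have hcostℙ : Integrable (fun ω => ‖(X : Ω → EuclideanSpace ℝ (Fin d)) ω
        - (Y : Ω → EuclideanSpace ℝ (Fin d)) ω‖ ^ 2) ℙ :=
      (memLp_two_iff_integrable_sq_norm hXY.aestronglyMeasurable).mp hXY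
    have hcost : Integrable
        (fun p : EuclideanSpace ℝ (Fin d) × EuclideanSpace ℝ (Fin d) =>
          ‖p.1 - p.2‖ ^ 2) γ := by
      rw [hγdef, integrable_map_measure
        (g := fun p : EuclideanSpace ℝ (Fin d) × EuclideanSpace ℝ (Fin d) => ‖p.1 - p.2‖ ^ 2)
        (((measurable_fst.sub measurable_snd).norm.pow_const 2).aestronglyMeasurable :
          AEStronglyMeasurable (fun p : EuclideanSpace ℝ (Fin d) × EuclideanSpace ℝ (Fin d) =>
            ‖p.1 - p.2‖ ^ 2) _)
        hpm.aemeasurable]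
      exact hcostℙ
    have hkey : (∫ p, ‖p.1 - p.2‖ ^ 2 ∂γ)
        = ∫ ω, ‖(X : Ω → EuclideanSpace ℝ (Fin d)) ω
            - (Y : Ω → EuclideanSpace ℝ (Fin d)) ω‖ ^ 2 ∂ℙ := by
      rw [hγdef]
      exact integral_map hpm.aemeasurable
        ((measurable_fst.sub measurable_snd).norm.pow_const 2).aestronglyMeasurable
    have hnorm' : Real.sqrt (∫ p, ‖p.1 - p.2‖ ^ 2 ∂γ) = ‖Y - X‖ := by
      rw [hkey, ← norm_sub_rev X Y, l2norm_eq_sqrt]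
      congr 1
      exact integral_congr_ae ((Lp.coeFn_sub X Y).mono fun ω h => by simp only [h, Pi.sub_apply])
    have hinner : (∫ p, ⟪g p.1, p.2 - p.1⟫ ∂γ) = (innerSL ℝ G) (Y - X) := by
      have hgγ : AEStronglyMeasurable
          (fun p : EuclideanSpace ℝ (Fin d) × EuclideanSpace ℝ (Fin d) => g p.1) γ := by
        have h1 : AEStronglyMeasurable g (γ.map Prod.fst) := by
          rw [hm1]; exact hg.aestronglyMeasurable
        exact h1.comp_aemeasurable measurable_fst.aemeasurable
      have hF : AEStronglyMeasurable
          (fun p : EuclideanSpace ℝ (Fin d) × EuclideanSpace ℝ (Fin d) =>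
            ⟪g p.1, p.2 - p.1⟫) γ :=
        hgγ.inner (measurable_snd.sub measurable_fst).aestronglyMeasurable
      rw [hγdef, integral_map hpm.aemeasurable hF, innerSL_apply_apply, L2.inner_def]
      refine integral_congr_ae ?_
      filter_upwards [hGcoe, Lp.coeFn_sub Y X] with ω h1 h2
      simp only [h1, h2, Function.comp_apply, Pi.sub_apply, hpairdef]
    have hsmall : Real.sqrt (∫ p, ‖p.1 - p.2‖ ^ 2 ∂γ) ≤ δ := by
      rw [hnorm']
      simpa [dist_eq_norm] using hY
    have hb := hδ' ν hνp hν2 γ hγp hm1 hm2 hcost hsmall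
    rw [hinner, hnorm'] at hb
    simpa [Real.norm_eq_abs, hνdef] using hb
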